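/- For 0 < k < 1, the quantity E'(k) - k·K'(k) is strictly positive, where E'(k) = E(√(1-k²)) and K'(k) = K(√(1-k²)). -/

import Mathlib

open Real

/-- Complete elliptic integral of the first kind. -/
noncomputable def ellK (r : ℝ) : ℝ :=
  ∫ θ in (0:ℝ)..(π/2), 1 / Real.sqrt (1 - r ^ 2 * Real.sin θ ^ 2)

/-- Complete elliptic integral of the second kind. -/
noncomputable def ellE (r : ℝ) : ℝ :=
  ∫ θ in (0:ℝ)..(π/2), Real.sqrt (1 - r ^ 2 * Real.sin θ ^ 2)

/-- Complementary elliptic integral K'(k) = K(√(1-k²)). -/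
noncomputable def ellK' (k : ℝ) : ℝ := ellK (Real.sqrt (1 - k ^ 2))

/-- Complementary elliptic integral E'(k) = E(√(1-k²)). -/
noncomputable def ellE' (k : ℝ) : ℝ := ellE (Real.sqrt (1 - k ^ 2))

/-- `√(1 - (1-k²)sin²θ)`, the integrand kernel for the complementary modulus. -/
noncomputable def auxU (k θ : ℝ) : ℝ := Real.sqrt (1 - (1-k^2) * Real.sin θ ^ 2)

/-- Derivative of the corrector function `sin·cos·(2(1-k)/(3u) + (1-k)u/3)`. -/
noncomputable def auxFd (k θ : ℝ) : ℝ :=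
  (Real.cos θ * Real.cos θ + Real.sin θ * -Real.sin θ) *
      (2*(1-k)/3 / auxU k θ + (1-k)/3 * auxU k θ)
  + Real.sin θ * Real.cos θ *
    ((0 * auxU k θ - 2*(1-k)/3 * (-((1-k^2) * (2*Real.sin θ * Real.cos θ)) / (2 * auxU k θ))) / (auxU k θ)^2
      + (1-k)/3 * (-((1-k^2) * (2*Real.sin θ * Real.cos θ)) / (2 * auxU k θ)))

lemma auxg_pos {k : ℝ} (hk0 : 0 < k) (hk1 : k < 1) (t : ℝ) :
    0 < 1 - (1-k^2) * Real.sin t ^ 2 := by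
  have h1 : (0:ℝ) ≤ (1-k^2) * (1 - Real.sin t ^ 2) :=
    mul_nonneg (by nlinarith) (by nlinarith [Real.sin_sq_le_one t])
  nlinarith

lemma auxU_pos {k : ℝ} (hk0 : 0 < k) (hk1 : k < 1) (t : ℝ) : 0 < auxU k t :=
  Real.sqrt_pos.2 (auxg_pos hk0 hk1 t)

lemma auxF_hasDerivAt {k : ℝ} (hk0 : 0 < k) (hk1 : k < 1) (θ : ℝ) :
    HasDerivAt (fun t => Real.sin t * Real.cos t *
      (2*(1-k)/3 / auxU k t + (1-k)/3 * auxU k t)) (auxFd k θ) θ := by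
  have hgpos := auxg_pos hk0 hk1
  have hu : 0 < auxU k θ := auxU_pos hk0 hk1 θ
  have hg' : HasDerivAt (fun t => 1 - (1-k^2) * Real.sin t ^ 2)
      (-((1-k^2) * (2 * Real.sin θ * Real.cos θ))) θ := by
    have := ((Real.hasDerivAt_sin θ).pow 2).const_mul (1-k^2)
    simpa [mul_comm, mul_assoc, mul_left_comm] using (this.const_sub 1)
  have hu' : HasDerivAt (auxU k)
      ((-((1-k^2) * (2 * Real.sin θ * Real.cos θ))) / (2 * auxU k θ)) θ :=
    hg'.sqrt (hgpos θ).ne'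
  have hq : HasDerivAt (fun t => 2*(1-k)/3 / auxU k t + (1-k)/3 * auxU k t)
      ((0 * auxU k θ - 2*(1-k)/3 * ((-((1-k^2) * (2 * Real.sin θ * Real.cos θ))) / (2 * auxU k θ))) / (auxU k θ)^2
        + (1-k)/3 * ((-((1-k^2) * (2 * Real.sin θ * Real.cos θ))) / (2 * auxU k θ))) θ :=
    ((hasDerivAt_const θ (2*(1-k)/3)).div hu' hu.ne').add (hu'.const_mul ((1-k)/3))
  exact ((Real.hasDerivAt_sin θ).mul (Real.hasDerivAt_cos θ)).mul hq

lemma auxFd_cont {k : ℝ} (hk0 : 0 < k) (hk1 : k < 1) : Continuous (auxFd k) := by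
  have hU : Continuous (auxU k) := by
    apply Continuous.sqrt; continuity
  have hUne : ∀ t, auxU k t ≠ 0 := fun t => (auxU_pos hk0 hk1 t).ne'
  apply Continuous.add
  · exact (by continuity : Continuous fun t => Real.cos t * Real.cos t + Real.sin t * -Real.sin t).mul
      ((continuous_const.div hU hUne).add (continuous_const.mul hU))
  · apply (Real.continuous_sin.mul Real.continuous_cos).mul
    have hinner : Continuous (fun t => -((1-k^2) * (2*Real.sin t * Real.cos t)) / (2 * auxU k t)) :=
      (by continuity : Continuous fun t => -((1-k^2) * (2*Real.sin t * Real.cos t))).div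
        (continuous_const.mul hU) (fun t => by simpa using (hUne t))
    exact (((continuous_const.mul hU).sub (continuous_const.mul hinner)).div (hU.pow 2)
      (fun t => pow_ne_zero 2 (hUne t))).add (continuous_const.mul hinner)

lemma key_ineq (k x : ℝ) (hk0 : 0 < k) (hk1 : k < 1) (hx0 : 0 < x) (hx1 : x < 1) :
    0 < 3 - x*(6+3*k-5*k^2-2*k^3) + 3*x^2*(1+k)^2*(1-k) := by
  have hγ : 0 < k^2*(2-k) := by nlinarith
  rcases le_or_gt (1/2 : ℝ) k with h | h
  · have hβ : 0 ≤ k*(2*k^2+5*k-3) := by nlinarith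
    nlinarith [sq_nonneg (1-x), mul_pos hx0 hx0,
      mul_nonneg (mul_nonneg hβ hx0.le) (sub_nonneg.2 hx1.le), mul_pos hγ (mul_pos hx0 hx0)]
  · have hd : 0 < 12*(2-k) - (2*k-1)^2*(k+3)^2 := by nlinarith
    nlinarith [sq_nonneg (6*(1-x) + k*(2*k^2+5*k-3)*x), mul_pos (mul_pos hk0 hk0) (mul_pos hx0 hx0),
      mul_pos hd (mul_pos hx0 hx0), mul_pos (mul_pos (mul_pos hk0 hk0) hd) (mul_pos hx0 hx0)]

lemma pointwise_pos {k : ℝ} (hk0 : 0 < k) (hk1 : k < 1) {θ : ℝ}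
    (hθ : θ ∈ Set.Ioo 0 (π/2)) :
    0 < auxU k θ - k * (1 / auxU k θ) - auxFd k θ := by
  obtain ⟨hθ0, hθ2⟩ := hθ
  have hs : 0 < Real.sin θ := Real.sin_pos_of_pos_of_lt_pi hθ0 (by linarith [Real.pi_pos])
  have hc : 0 < Real.cos θ := Real.cos_pos_of_mem_Ioo ⟨by linarith [Real.pi_pos], hθ2⟩
  have hpyth : Real.cos θ ^ 2 = 1 - Real.sin θ ^ 2 := Real.cos_sq' θ
  have hs1 : Real.sin θ ^ 2 < 1 := by nlinarith
  have hu : 0 < auxU k θ := auxU_pos hk0 hk1 θ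
  have hu2 : auxU k θ ^ 2 = 1 - (1-k^2) * Real.sin θ ^ 2 :=
    Real.sq_sqrt (auxg_pos hk0 hk1 θ).le
  set s := Real.sin θ with hsdef
  set c := Real.cos θ with hcdef
  set u := auxU k θ with hudef
  have hN : 0 < (u^2 - k)*u^2 - (2*(1-k)/3)*((c^2-s^2)*u^2 + (1-k^2)*s^2*c^2)
      - ((1-k)/3)*((c^2-s^2)*u^2*u^2 - (1-k^2)*s^2*c^2*u^2) := by
    have hc2 : c^2 = 1 - s^2 := hpyth
    rw [hc2, hu2]
    have key := key_ineq k (s^2) hk0 hk1 (by positivity) hs1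
    nlinarith [mul_pos (mul_pos (show (0:ℝ) < s^2 by positivity)
      (show (0:ℝ) < (1-k)^2 by nlinarith)) key]
  have hrw : u - k * (1/u) - auxFd k θ =
      ((u^2 - k)*u^2 - (2*(1-k)/3)*((c^2-s^2)*u^2 + (1-k^2)*s^2*c^2)
      - ((1-k)/3)*((c^2-s^2)*u^2*u^2 - (1-k^2)*s^2*c^2*u^2)) / u^3 := by
    rw [auxFd, ← hsdef, ← hcdef, ← hudef]
    field_simp
    ring
  rw [hrw]
  exact div_pos hN (by positivity)

/-- For 0 < k < 1, E'(k) - k·K'(k) > 0. -/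
theorem ellE'_sub_pos : ∀ k ∈ Set.Ioo (0:ℝ) 1, 0 < ellE' k - k * ellK' k := by
  rintro k ⟨hk0, hk1⟩
  have hm : (0:ℝ) ≤ 1 - k ^ 2 := by nlinarith
  have hU : Continuous (auxU k) := by
    apply Continuous.sqrt; continuity
  have hUne : ∀ t, auxU k t ≠ 0 := fun t => (auxU_pos hk0 hk1 t).ne'
  have hi1 : IntervalIntegrable (fun θ => auxU k θ) MeasureTheory.volume 0 (π/2) :=
    hU.intervalIntegrable 0 (π/2)
  have hi2 : IntervalIntegrable (fun θ => k * (1 / auxU k θ)) MeasureTheory.volume 0 (π/2) :=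
    (continuous_const.mul (continuous_const.div hU hUne)).intervalIntegrable 0 (π/2)
  have hi3 : IntervalIntegrable (auxFd k) MeasureTheory.volume 0 (π/2) :=
    (auxFd_cont hk0 hk1).intervalIntegrable 0 (π/2)
  have hFTC : (∫ θ in (0:ℝ)..(π/2), auxFd k θ) = 0 := by
    rw [intervalIntegral.integral_eq_sub_of_hasDerivAt
      (fun θ _ => auxF_hasDerivAt hk0 hk1 θ) hi3]
    simp [Real.cos_pi_div_two]
  have hE : ellE' k = ∫ θ in (0:ℝ)..(π/2), auxU k θ := by
    simp only [ellE', ellE, Real.sq_sqrt hm, auxU]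
  have hK : ellK' k = ∫ θ in (0:ℝ)..(π/2), 1 / auxU k θ := by
    simp only [ellK', ellK, Real.sq_sqrt hm, auxU]
  have hpos : 0 < ∫ θ in (0:ℝ)..(π/2), (auxU k θ - k * (1 / auxU k θ) - auxFd k θ) := by
    apply intervalIntegral.intervalIntegral_pos_of_pos_on ((hi1.sub hi2).sub hi3)
    · intro θ hθ
      exact pointwise_pos hk0 hk1 hθ
    · positivity
  rw [intervalIntegral.integral_sub (hi1.sub hi2) hi3,
    intervalIntegral.integral_sub hi1 hi2, hFTC,
    intervalIntegral.integral_const_mul] at hpos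
  rw [hE, hK]
  linarith
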